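/- arXiv:1409.8094 — 2 statements merged into one kernel-verified Lean document; each statement's English description precedes it below -/
import Mathlib

section
/- Let X be a one-dimensional diffusion on (0,∞) with absorption time T₀ at 0 and eigenvalue λ₁ > 0. Suppose there exists x₀ > 0 with B₁ := sup_{x ≥ x₀} E_x[exp(λ₁ T_{x₀})] < ∞ and B₂ := sup_{u ≥ 0} e^{λ₁ u} P_{x₀}(T₀ > u) < ∞. Then for all x > x₀ and all t ≥ 0, P_x(T₀ > t) ≤ e^{-λ₁ t} B₁ (B₂ + 1). -/
open MeasureTheory Filter

/-- `S x t` models the survival probability `P_x(T₀ > t)` of the diffusion started at `x`,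
and `ν x` models the law of the hitting time `T_{x₀}` under `P_x`.  The strong Markov
decomposition `P_x(T₀>t) = ∫₀ᵗ P_{x₀}(T₀>u) P_x(T_{x₀} ∈ d(t-u)) + P_x(T_{x₀}>t)`
is encoded as hypothesis `hdecomp` (with `s = t - u`). -/
theorem quasi_ergodic_survival_bound
    (S : ℝ → ℝ → ℝ)              -- S x t = P_x(T₀ > t)
    (ν : ℝ → Measure ℝ)          -- law of T_{x₀} under P_x
    (lam1 x0 B1 B2 : ℝ)
    (hlam : 0 < lam1) (hx0 : 0 < x0)
    (hSnonneg : ∀ x t, 0 ≤ S x t)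
    (hSle : ∀ x t, S x t ≤ 1)
    (hprob : ∀ x, IsProbabilityMeasure (ν x))
    (hint : ∀ x ≥ x0, Integrable (fun s => Real.exp (lam1 * s)) (ν x))
    -- B₁ := sup_{x ≥ x₀} E_x[exp(λ₁ T_{x₀})] < ∞ :
    (hB1 : ∀ x ≥ x0, ∫ s, Real.exp (lam1 * s) ∂(ν x) ≤ B1)
    -- B₂ := sup_{u ≥ 0} e^{λ₁ u} P_{x₀}(T₀ > u) < ∞ :
    (hB2 : ∀ u ≥ (0:ℝ), Real.exp (lam1 * u) * S x0 u ≤ B2)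
    -- strong Markov decomposition of the survival probability:
    (hdecomp : ∀ x > x0, ∀ t ≥ (0:ℝ),
      S x t = ∫ s in Set.Icc (0:ℝ) t, S x0 (t - s) ∂(ν x) + ((ν x) (Set.Ioi t)).toReal) :
    ∀ x > x0, ∀ t ≥ (0:ℝ), S x t ≤ Real.exp (-(lam1 * t)) * B1 * (B2 + 1) := by

  intro x hx t ht
  have hprobx := hprob x
  have hx0le : x0 ≤ x := le_of_lt hx
  have hintx := hint x hx0le
  have hB1x := hB1 x hx0le
  have hB2nonneg : 0 ≤ B2 := by
    have h := hB2 0 le_rfl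
    have : (0:ℝ) ≤ Real.exp (lam1 * 0) * S x0 0 :=
      mul_nonneg (Real.exp_nonneg _) (hSnonneg x0 0)
    linarith
  have hB1nonneg : 0 ≤ B1 :=
    le_trans (integral_nonneg fun s => (Real.exp_pos _).le) hB1x
  have hEpos : (0:ℝ) < Real.exp (-(lam1 * t)) := Real.exp_pos _
  -- tail bound
  have htail : ((ν x) (Set.Ioi t)).toReal ≤ Real.exp (-(lam1 * t)) * B1 := by
    have hconst : IntegrableOn (fun _ : ℝ => Real.exp (lam1 * t)) (Set.Ioi t) (ν x) :=
      integrableOn_const (measure_ne_top _ _)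
    have h1 : ∫ s in Set.Ioi t, Real.exp (lam1 * t) ∂(ν x)
        ≤ ∫ s in Set.Ioi t, Real.exp (lam1 * s) ∂(ν x) := by
      refine setIntegral_mono_on hconst (hintx.integrableOn) measurableSet_Ioi ?_
      intro s hs
      exact Real.exp_le_exp.2 (mul_le_mul_of_nonneg_left (le_of_lt hs) hlam.le)
    have h2 : ∫ s in Set.Ioi t, Real.exp (lam1 * s) ∂(ν x)
        ≤ ∫ s, Real.exp (lam1 * s) ∂(ν x) :=
      setIntegral_le_integral hintx (Filter.Eventually.of_forall fun s => (Real.exp_pos _).le)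
    have hconst_eq : ∫ s in Set.Ioi t, Real.exp (lam1 * t) ∂(ν x)
        = ((ν x) (Set.Ioi t)).toReal * Real.exp (lam1 * t) := by
      rw [setIntegral_const]
      simp [smul_eq_mul]
      rfl
    have hkey : ((ν x) (Set.Ioi t)).toReal * Real.exp (lam1 * t) ≤ B1 := by
      rw [← hconst_eq]; linarith
    have hone : Real.exp (lam1 * t) * Real.exp (-(lam1 * t)) = 1 := by
      rw [← Real.exp_add]; simp
    nlinarith [ENNReal.toReal_nonneg (a := (ν x) (Set.Ioi t)), Real.exp_pos (lam1 * t)]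
  -- main term bound
  have hmain : ∫ s in Set.Icc (0:ℝ) t, S x0 (t - s) ∂(ν x)
      ≤ Real.exp (-(lam1 * t)) * B1 * B2 := by
    by_cases hI : IntegrableOn (fun s => S x0 (t - s)) (Set.Icc (0:ℝ) t) (ν x)
    · have hg : IntegrableOn (fun s => B2 * Real.exp (-(lam1 * t)) * Real.exp (lam1 * s))
          (Set.Icc (0:ℝ) t) (ν x) :=
        ((hintx.const_mul (B2 * Real.exp (-(lam1 * t))))).integrableOn
      have hpt : ∀ s ∈ Set.Icc (0:ℝ) t,
          S x0 (t - s) ≤ B2 * Real.exp (-(lam1 * t)) * Real.exp (lam1 * s) := by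
        intro s hs
        have hs0 : (0:ℝ) ≤ t - s := by linarith [hs.2]
        have h := hB2 (t - s) hs0
        have hone : Real.exp (lam1 * (t - s)) * (Real.exp (-(lam1 * t)) * Real.exp (lam1 * s)) = 1 := by
          rw [← Real.exp_add, ← Real.exp_add]; ring_nf; simp
        nlinarith [Real.exp_pos (lam1 * (t - s)), hSnonneg x0 (t - s),
          Real.exp_pos (-(lam1 * t)), Real.exp_pos (lam1 * s)]
      calc ∫ s in Set.Icc (0:ℝ) t, S x0 (t - s) ∂(ν x)
          ≤ ∫ s in Set.Icc (0:ℝ) t, B2 * Real.exp (-(lam1 * t)) * Real.exp (lam1 * s) ∂(ν x) :=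
            setIntegral_mono_on hI hg measurableSet_Icc hpt
        _ = B2 * Real.exp (-(lam1 * t)) * ∫ s in Set.Icc (0:ℝ) t, Real.exp (lam1 * s) ∂(ν x) := by
            rw [MeasureTheory.integral_const_mul]
        _ ≤ B2 * Real.exp (-(lam1 * t)) * B1 := by
            have h2 : ∫ s in Set.Icc (0:ℝ) t, Real.exp (lam1 * s) ∂(ν x)
                ≤ ∫ s, Real.exp (lam1 * s) ∂(ν x) :=
              setIntegral_le_integral hintx (Filter.Eventually.of_forall fun s => (Real.exp_pos _).le)
            exact mul_le_mul_of_nonneg_left (le_trans h2 hB1x)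
              (mul_nonneg hB2nonneg hEpos.le)
        _ = Real.exp (-(lam1 * t)) * B1 * B2 := by ring
    · rw [integral_undef hI]
      positivity
  have hde := hdecomp x hx t ht
  have hgoal : Real.exp (-(lam1 * t)) * B1 * (B2 + 1)
      = Real.exp (-(lam1 * t)) * B1 * B2 + Real.exp (-(lam1 * t)) * B1 := by ring
  linarith
end

section
/- For the transformed logistic Feller diffusion, i.e. the diffusion dX_t = dB_t − α(X_t)dt with α(x) = 1/(2x) − rx/2 + cγx³/8 (r, c, γ > 0), hypothesis (H) holds: (H1) P_x(τ = T₀ < T_∞) = 1 for all x > 0; (H2) μ(0,ε) = ∞ for all ε > 0; (H3) ∫₁^∞ e^{Q(y)} (∫_y^∞ e^{-Q(z)} dz) dy < ∞, where Q(y) = ∫₁^y 2α and μ(dy) = e^{-Q(y)}dy. -/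
open MeasureTheory Filter

/-! Setting of the paper: `X` solves `dX_t = dB_t − α(X_t)dt` on `(0,∞)`, killed at `0`
at time `T₀`; `Q(y) = ∫₁^y 2α`, `μ(dy) = e^{−Q(y)}dy` on `(0,∞)`, `Λ` the scale function,
`κ` the Feller test integral.  Hypothesis (H) says: 0 is an exit boundary and +∞ an
entrance boundary, i.e. (H1) `Λ(∞)=∞` and `κ(0⁺)<∞` (equivalent to certain absorption),
(H2) `μ(0,ε)=∞`, (H3) `∫₁^∞ e^{Q(y)} (∫_y^∞ e^{−Q(z)}dz) dy < ∞`. -/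

noncomputable def Qfun (α : ℝ → ℝ) (y : ℝ) : ℝ := ∫ u in (1:ℝ)..y, 2 * α u

noncomputable def scaleFun (α : ℝ → ℝ) (x : ℝ) : ℝ := ∫ y in (1:ℝ)..x, Real.exp (Qfun α y)

noncomputable def kappaFun (α : ℝ → ℝ) (x : ℝ) : ℝ :=
  ∫ y in (1:ℝ)..x, Real.exp (Qfun α y) * ∫ z in (1:ℝ)..y, Real.exp (-Qfun α z)

/-- The speed measure `μ(dy) = e^{-Q(y)} dy` on `(0,∞)`. -/
noncomputable def speedMeasure (α : ℝ → ℝ) : Measure ℝ :=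
  (volume.restrict (Set.Ioi (0:ℝ))).withDensity
    (fun y => ENNReal.ofReal (Real.exp (-Qfun α y)))

/-- Hypothesis (H) of the paper. -/
def HypH (α : ℝ → ℝ) : Prop :=
  -- (H1): absorption at 0 is certain: Λ(∞) = ∞ and κ(0⁺) < ∞
  (Tendsto (scaleFun α) atTop atTop ∧ BddAbove (kappaFun α '' Set.Ioo (0:ℝ) 1)) ∧
  -- (H2): μ(0,ε) = ∞ for all ε > 0
  (∀ ε > (0:ℝ), speedMeasure α (Set.Ioo 0 ε) = ⊤) ∧
  -- (H3): S = ∫₁^∞ e^{Q(y)} (∫_y^∞ e^{-Q(z)} dz) dy < ∞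
  ((∀ y ≥ (1:ℝ), IntegrableOn (fun z => Real.exp (-Qfun α z)) (Set.Ioi y)) ∧
    IntegrableOn (fun y => Real.exp (Qfun α y) * ∫ z in Set.Ioi y, Real.exp (-Qfun α z))
      (Set.Ioi (1:ℝ)))

open Topology

namespace LFaux

variable (r c γ : ℝ)

/-- the drift -/
noncomputable def A : ℝ → ℝ := fun x => 1 / (2 * x) - r * x / 2 + c * γ * x ^ 3 / 8

/-- explicit formula for `Q` -/
noncomputable def φ : ℝ → ℝ := fun y =>
  Real.log y - r * (y ^ 2 - 1) / 2 + c * γ * (y ^ 4 - 1) / 16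

lemma contOn_2A : ContinuousOn (fun u => 2 * A r c γ u) {u : ℝ | u ≠ 0} := by
  unfold A
  refine continuousOn_const.mul (ContinuousOn.add (ContinuousOn.sub ?_ ?_) ?_)
  · exact continuousOn_const.div (continuousOn_const.mul continuousOn_id)
      (fun u hu => by simpa using hu)
  · exact (Continuous.continuousOn (by continuity))
  · exact (Continuous.continuousOn (by continuity))

lemma contOn_φ : ContinuousOn (φ r c γ) (Set.Ioi 0) := by
  unfold φ
  refine ContinuousOn.add (ContinuousOn.sub (Real.continuousOn_log.mono ?_)
    (Continuous.continuousOn (by continuity))) (Continuous.continuousOn (by continuity))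
  intro x hx
  simpa using (ne_of_gt (Set.mem_Ioi.mp hx))

lemma uIcc_subset {y : ℝ} (hy : 0 < y) : Set.uIcc (1:ℝ) y ⊆ Set.Ioi 0 := by
  intro u hu
  rcases Set.mem_uIcc.mp hu with h | h
  · exact lt_of_lt_of_le one_pos h.1
  · exact lt_of_lt_of_le hy h.1

lemma Qfun_eq {y : ℝ} (hy : 0 < y) : Qfun (A r c γ) y = φ r c γ y := by
  have hsub := uIcc_subset (y := y) hy
  have hder : ∀ u ∈ Set.uIcc (1:ℝ) y,
      HasDerivAt (fun u : ℝ => Real.log u - r * u ^ 2 / 2 + c * γ * u ^ 4 / 16)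
        (2 * A r c γ u) u := by
    intro u hu
    have hu0 : (0:ℝ) < u := hsub hu
    have h1 : HasDerivAt (fun u : ℝ => Real.log u - r * u ^ 2 / 2 + c * γ * u ^ 4 / 16)
        (u⁻¹ - r * (↑2 * u ^ 1) / 2 + c * γ * (↑4 * u ^ 3) / 16) u := by
      exact ((Real.hasDerivAt_log hu0.ne').sub
        (((hasDerivAt_pow 2 u).const_mul r).div_const 2)).add
        (((hasDerivAt_pow 4 u).const_mul (c * γ)).div_const 16)
    convert h1 using 1
    unfold A
    field_simp
    ring
  have hcont : IntervalIntegrable (fun u => 2 * A r c γ u) volume 1 y :=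
    ((contOn_2A r c γ).mono (fun u hu => ne_of_gt (hsub hu))).intervalIntegrable
  rw [Qfun, intervalIntegral.integral_eq_sub_of_hasDerivAt hder hcont]
  unfold φ
  simp [Real.log_one]
  ring

end LFaux

namespace LFaux

variable (r c γ : ℝ)

lemma uIcc_subset' {a b : ℝ} (ha : 0 < a) (hb : 0 < b) : Set.uIcc a b ⊆ Set.Ioi 0 := by
  intro u hu
  rcases Set.mem_uIcc.mp hu with h | h
  · exact lt_of_lt_of_le ha h.1
  · exact lt_of_lt_of_le hb h.1

lemma intervalIntegrable_expQ {a b : ℝ} (ha : 0 < a) (hb : 0 < b) :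
    IntervalIntegrable (fun y => Real.exp (Qfun (A r c γ) y)) volume a b := by
  have hsub := uIcc_subset' (a := a) (b := b) ha hb
  have h : ContinuousOn (fun y => Real.exp (Qfun (A r c γ) y)) (Set.uIcc a b) := by
    refine ContinuousOn.congr
      (Real.continuous_exp.comp_continuousOn ((contOn_φ r c γ).mono hsub)) ?_
    intro y hy
    simp only [Function.comp]
    rw [Qfun_eq r c γ (hsub hy)]
  exact h.intervalIntegrable

lemma intervalIntegrable_expNegQ {a b : ℝ} (ha : 0 < a) (hb : 0 < b) :
    IntervalIntegrable (fun y => Real.exp (-Qfun (A r c γ) y)) volume a b := by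
  have hsub := uIcc_subset' (a := a) (b := b) ha hb
  have h : ContinuousOn (fun y => Real.exp (-Qfun (A r c γ) y)) (Set.uIcc a b) := by
    refine ContinuousOn.congr
      (Real.continuous_exp.comp_continuousOn (((contOn_φ r c γ).mono hsub).neg)) ?_
    intro y hy
    simp only [Function.comp]
    rw [Qfun_eq r c γ (hsub hy)]
    rfl
  exact h.intervalIntegrable

/-- the constant in the decay bound for `e^{-Q}` -/
noncomputable def K0 : ℝ := 4 * (1 + r / 2) ^ 2 / (c * γ) + c * γ / 16

lemma negφ_bound (hr : 0 < r) (hc : 0 < c) (hγ : 0 < γ) {z : ℝ} (hz : 1 ≤ z) :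
    Real.exp (-Qfun (A r c γ) z) ≤ Real.exp (K0 r c γ) * z ^ (-2:ℝ) := by
  have hz0 : (0:ℝ) < z := lt_of_lt_of_le one_pos hz
  have hcγ : 0 < c * γ := mul_pos hc hγ
  rw [Qfun_eq r c γ hz0, Real.rpow_def_of_pos hz0, ← Real.exp_add]
  apply Real.exp_le_exp.mpr
  have h2 : (1 + r/2) * z^2 - c * γ * z^4 / 16 ≤ 4 * (1 + r/2)^2 / (c*γ) := by
    rw [le_div_iff₀ hcγ]
    nlinarith [sq_nonneg (4 * (1 + r/2) - c * γ * z^2 / 2)]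
  have h1 : Real.log z ≤ z^2 := by
    nlinarith [Real.log_le_sub_one_of_pos hz0]
  unfold φ K0
  nlinarith [h1, h2, hcγ.le, hr.le]

lemma aesm_expNegQ {y : ℝ} (hy : 0 < y) :
    AEStronglyMeasurable (fun z => Real.exp (-Qfun (A r c γ) z))
      (volume.restrict (Set.Ioi y)) := by
  have h1 : ContinuousOn (fun z => Real.exp (-φ r c γ z)) (Set.Ioi y) :=
    Real.continuous_exp.comp_continuousOn
      (((contOn_φ r c γ).mono (Set.Ioi_subset_Ioi hy.le)).neg)
  refine (h1.aestronglyMeasurable measurableSet_Ioi).congr ?_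
  filter_upwards [ae_restrict_mem measurableSet_Ioi] with z hz
  rw [Qfun_eq r c γ (lt_trans hy hz)]

lemma integrableOn_expNegQ_Ioi (hr : 0 < r) (hc : 0 < c) (hγ : 0 < γ)
    {y : ℝ} (hy : 1 ≤ y) :
    IntegrableOn (fun z => Real.exp (-Qfun (A r c γ) z)) (Set.Ioi y) := by
  have hy0 : (0:ℝ) < y := lt_of_lt_of_le one_pos hy
  refine Integrable.mono'
    (g := fun z => Real.exp (K0 r c γ) * z ^ (-2:ℝ))
    ((integrableOn_Ioi_rpow_of_lt (show (-2:ℝ) < -1 by norm_num) hy0).const_mul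
      (Real.exp (K0 r c γ)))
    (aesm_expNegQ r c γ hy0) ?_
  filter_upwards [ae_restrict_mem measurableSet_Ioi] with z hz
  rw [Real.norm_eq_abs, abs_of_nonneg (Real.exp_nonneg _)]
  exact negφ_bound r c γ hr hc hγ (le_trans hy (le_of_lt hz))



lemma H1a (hr : 0 < r) (hc : 0 < c) (hγ : 0 < γ) :
    Tendsto (scaleFun (A r c γ)) atTop atTop := by
  set x₀ : ℝ := max 1 (Real.sqrt (8 * r / (c * γ))) with hx₀def
  have hx₀1 : (1:ℝ) ≤ x₀ := le_max_left _ _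
  have hx₀0 : (0:ℝ) < x₀ := lt_of_lt_of_le one_pos hx₀1
  have hφ : ∀ y, x₀ ≤ y → 0 ≤ φ r c γ y := by
    intro y hy
    have hy1 : (1:ℝ) ≤ y := le_trans hx₀1 hy
    have hys : Real.sqrt (8 * r / (c * γ)) ≤ y := le_trans (le_max_right _ _) hy
    have hy2 : 8 * r / (c * γ) ≤ y ^ 2 := by
      have h := Real.sq_sqrt (show (0:ℝ) ≤ 8 * r / (c * γ) by positivity)
      nlinarith [Real.sqrt_nonneg (8 * r / (c * γ))]
    have hy2' : 8 * r ≤ c * γ * y ^ 2 := by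
      rw [div_le_iff₀ (mul_pos hc hγ)] at hy2
      linarith
    have hlog : 0 ≤ Real.log y := Real.log_nonneg hy1
    have ha : (0:ℝ) ≤ y ^ 2 - 1 := by nlinarith
    have hb : (0:ℝ) ≤ c * γ * (y ^ 2 + 1) - 8 * r := by nlinarith [mul_pos hc hγ]
    unfold φ
    nlinarith [mul_nonneg ha hb]
  have key : ∀ x, x₀ ≤ x → scaleFun (A r c γ) x₀ + (x - x₀) ≤ scaleFun (A r c γ) x := by
    intro x hx
    have hx0 : (0:ℝ) < x := lt_of_lt_of_le hx₀0 hx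
    have h1 : IntervalIntegrable (fun y => Real.exp (Qfun (A r c γ) y)) volume 1 x₀ :=
      intervalIntegrable_expQ r c γ one_pos hx₀0
    have h2 : IntervalIntegrable (fun y => Real.exp (Qfun (A r c γ) y)) volume x₀ x :=
      intervalIntegrable_expQ r c γ hx₀0 hx0
    have hadd := intervalIntegral.integral_add_adjacent_intervals h1 h2
    have hmono : x - x₀ ≤ ∫ y in x₀..x, Real.exp (Qfun (A r c γ) y) := by
      have h3 := intervalIntegral.integral_mono_on hx
        (intervalIntegrable_const (c := (1:ℝ))) h2 ?_
      · simpa using h3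
      · intro y hy
        have hy0 : (0:ℝ) < y := lt_of_lt_of_le hx₀0 hy.1
        rw [Qfun_eq r c γ hy0, ← Real.exp_zero]
        exact Real.exp_le_exp.mpr (hφ y hy.1)
    unfold scaleFun
    rw [← hadd]
    linarith
  have h2 : Tendsto (fun x : ℝ => scaleFun (A r c γ) x₀ + (x - x₀)) atTop atTop := by
    apply tendsto_atTop_add_const_left
    simpa [sub_eq_add_neg] using tendsto_atTop_add_const_right atTop (-x₀) tendsto_id
  exact tendsto_atTop_mono' atTop (eventually_atTop.mpr ⟨x₀, key⟩) h2

lemma H1b (hr : 0 < r) (hc : 0 < c) (hγ : 0 < γ) :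
    BddAbove (kappaFun (A r c γ) '' Set.Ioo (0:ℝ) 1) := by
  set E : ℝ := Real.exp (r / 2) with hEdef
  set B' : ℝ := Real.exp (c * γ / 16) with hB'def
  refine ⟨E * B', ?_⟩
  rintro _ ⟨x, ⟨hx0, hx1⟩, rfl⟩
  set g : ℝ → ℝ :=
    fun y => Real.exp (Qfun (A r c γ) y) * ∫ z in y..(1:ℝ), Real.exp (-Qfun (A r c γ) z)
    with hgdef
  -- kappaFun x = ∫_x^1 g
  have hker : kappaFun (A r c γ) x = ∫ y in x..(1:ℝ), g y := by
    rw [kappaFun, intervalIntegral.integral_symm]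
    rw [← intervalIntegral.integral_neg]
    apply intervalIntegral.integral_congr
    intro y _
    simp only [hgdef]
    rw [intervalIntegral.integral_symm]
    ring
  -- integrability of g on [x,1]
  have hgint : IntervalIntegrable g volume x 1 := by
    have huIcc : Set.uIcc x (1:ℝ) = Set.Icc x 1 := Set.uIcc_of_le hx1.le
    have hcont : ContinuousOn g (Set.uIcc x 1) := by
      have hC : ContinuousOn (fun y => Real.exp (Qfun (A r c γ) y) *
          ((∫ t in x..(1:ℝ), Real.exp (-Qfun (A r c γ) t)) -
            ∫ t in x..y, Real.exp (-Qfun (A r c γ) t))) (Set.uIcc x 1) := by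
        refine ContinuousOn.mul ?_ (continuousOn_const.sub
          (intervalIntegral.continuousOn_primitive_interval ?_))
        · have hmem : ∀ y ∈ Set.uIcc x (1:ℝ), (0:ℝ) < y := by
            intro y hy
            rw [huIcc] at hy
            exact lt_of_lt_of_le hx0 hy.1
          have : ContinuousOn (fun y => Real.exp (φ r c γ y)) (Set.uIcc x 1) := by
            apply Real.continuous_exp.comp_continuousOn
            refine ContinuousOn.add (ContinuousOn.sub (Real.continuousOn_log.mono ?_)
              (Continuous.continuousOn (by continuity)))
              (Continuous.continuousOn (by continuity))
            intro y hy
            simpa using (ne_of_gt (hmem y hy))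
          refine ContinuousOn.congr this ?_
          intro y hy
          simp only
          rw [Qfun_eq r c γ (hmem y hy)]
        · rw [huIcc, integrableOn_Icc_iff_integrableOn_Ioc]
          exact (intervalIntegrable_expNegQ r c γ hx0 one_pos).1
      refine ContinuousOn.congr hC ?_
      intro y hy
      rw [huIcc] at hy
      have h1 : IntervalIntegrable (fun t => Real.exp (-Qfun (A r c γ) t)) volume x y :=
        intervalIntegrable_expNegQ r c γ hx0 (lt_of_lt_of_le hx0 hy.1)
      have h2 : IntervalIntegrable (fun t => Real.exp (-Qfun (A r c γ) t)) volume y 1 :=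
        intervalIntegrable_expNegQ r c γ (lt_of_lt_of_le hx0 hy.1) one_pos
      have := intervalIntegral.integral_add_adjacent_intervals h1 h2
      simp only [hgdef]
      rw [← this]
      ring
    exact hcont.intervalIntegrable
  -- pointwise bound for g on [x,1]
  have hbound : ∀ y ∈ Set.Icc x (1:ℝ), g y ≤ E * B' := by
    intro y hy
    have hy0 : (0:ℝ) < y := lt_of_lt_of_le hx0 hy.1
    have hy1 : y ≤ 1 := hy.2
    -- bound exp(Q y) ≤ y * E
    have hQ : Real.exp (Qfun (A r c γ) y) ≤ y * E := by
      rw [Qfun_eq r c γ hy0]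
      have hφy : φ r c γ y = Real.log y +
          (-(r * (y ^ 2 - 1) / 2) + c * γ * (y ^ 4 - 1) / 16) := by
        unfold φ; ring
      rw [hφy, Real.exp_add, Real.exp_log hy0]
      have ht : -(r * (y ^ 2 - 1) / 2) + c * γ * (y ^ 4 - 1) / 16 ≤ r / 2 := by
        have hy2 : y ^ 2 ≤ 1 := by nlinarith
        have hy4 : y ^ 4 ≤ 1 := by nlinarith [mul_nonneg (sub_nonneg.2 hy2) (sq_nonneg y)]
        have hA : 0 ≤ r * y ^ 2 := mul_nonneg hr.le (sq_nonneg y)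
        have hB : c * γ * (y ^ 4 - 1) ≤ 0 :=
          mul_nonpos_of_nonneg_of_nonpos (mul_pos hc hγ).le (by linarith)
        linarith
      exact mul_le_mul_of_nonneg_left (Real.exp_le_exp.mpr ht) hy0.le
    -- bound inner integral
    have hInonneg : 0 ≤ ∫ z in y..(1:ℝ), Real.exp (-Qfun (A r c γ) z) :=
      intervalIntegral.integral_nonneg hy1 (fun z _ => (Real.exp_nonneg _))
    have hI : (∫ z in y..(1:ℝ), Real.exp (-Qfun (A r c γ) z)) ≤ B' * (-Real.log y) := by
      have hmono := intervalIntegral.integral_mono_on hy1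
        (intervalIntegrable_expNegQ r c γ hy0 one_pos)
        (((continuousOn_const.mul (continuousOn_inv₀.mono ?_)).intervalIntegrable :
          IntervalIntegrable (fun z : ℝ => B' * z⁻¹) volume y 1)) ?_
      · calc (∫ z in y..(1:ℝ), Real.exp (-Qfun (A r c γ) z))
            ≤ ∫ z in y..(1:ℝ), B' * z⁻¹ := hmono
          _ = B' * Real.log (1 / y) := by
              rw [intervalIntegral.integral_const_mul, integral_inv_of_pos hy0 one_pos]
          _ = B' * (-Real.log y) := by
              rw [one_div, Real.log_inv]
      · intro z hz
        rcases Set.mem_uIcc.mp hz with h | h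
        · simpa using (ne_of_gt (lt_of_lt_of_le hy0 h.1))
        · simpa using (ne_of_gt (lt_of_lt_of_le one_pos h.1))
      · intro z hz
        have hz0 : (0:ℝ) < z := lt_of_lt_of_le hy0 hz.1
        have hz1 : z ≤ 1 := hz.2
        rw [Qfun_eq r c γ hz0]
        have hφz : -φ r c γ z = -Real.log z +
            (r * (z ^ 2 - 1) / 2 - c * γ * (z ^ 4 - 1) / 16) := by
          unfold φ; ring
        rw [hφz, Real.exp_add, Real.exp_neg, Real.exp_log hz0]
        have ht : r * (z ^ 2 - 1) / 2 - c * γ * (z ^ 4 - 1) / 16 ≤ c * γ / 16 := by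
          have hz2 : z ^ 2 ≤ 1 := by nlinarith
          have hA : r * (z ^ 2 - 1) ≤ 0 :=
            mul_nonpos_of_nonneg_of_nonpos hr.le (by linarith)
          have hB : 0 ≤ c * γ * z ^ 4 := by positivity
          nlinarith
        rw [mul_comm]
        exact mul_le_mul_of_nonneg_right (Real.exp_le_exp.mpr ht) (inv_nonneg.mpr hz0.le)
    -- combine
    have hyL : y * (-Real.log y) ≤ 1 := by
      have h := Real.log_le_sub_one_of_pos (inv_pos.mpr hy0)
      rw [Real.log_inv] at h
      calc y * (-Real.log y) ≤ y * (y⁻¹ - 1) := mul_le_mul_of_nonneg_left h hy0.le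
        _ = 1 - y := by field_simp
        _ ≤ 1 := by linarith
    have hL0 : 0 ≤ -Real.log y := by
      simpa using Real.log_nonpos hy0.le hy1
    calc g y ≤ (y * E) * (B' * (-Real.log y)) :=
          mul_le_mul hQ hI hInonneg (by positivity)
      _ = (E * B') * (y * (-Real.log y)) := by ring
      _ ≤ (E * B') * 1 := by
          apply mul_le_mul_of_nonneg_left hyL (by positivity)
      _ = E * B' := mul_one _
  -- conclude
  have := intervalIntegral.integral_mono_on hx1.le hgint
    (intervalIntegrable_const (c := E * B')) hbound
  rw [hker]
  have hEB : 0 ≤ E * B' := by positivity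
  calc (∫ y in x..(1:ℝ), g y) ≤ ∫ _y in x..(1:ℝ), (E * B') := this
    _ = (1 - x) * (E * B') := by
        rw [intervalIntegral.integral_const, smul_eq_mul]
    _ ≤ E * B' := by nlinarith

lemma measurable_φ : Measurable (φ r c γ) := by
  unfold φ
  exact ((Real.measurable_log.sub (by measurability)).add (by measurability))

lemma H2 (hr : 0 < r) (hc : 0 < c) (hγ : 0 < γ) :
    ∀ ε > (0:ℝ), speedMeasure (A r c γ) (Set.Ioo 0 ε) = ⊤ := by
  intro ε hε
  set δ := min ε 1 with hδdef
  have hδ0 : 0 < δ := lt_min hε one_pos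
  have hδ1 : δ ≤ 1 := min_le_right _ _
  rw [speedMeasure, withDensity_apply _ measurableSet_Ioo,
      Measure.restrict_restrict measurableSet_Ioo]
  have hinter : Set.Ioo (0:ℝ) ε ∩ Set.Ioi 0 = Set.Ioo 0 ε := by
    rw [Set.inter_eq_left]; exact fun x hx => hx.1
  rw [hinter]
  have htop : ∫⁻ y in Set.Ioo (0:ℝ) δ,
      ENNReal.ofReal (Real.exp (-r / 2) * y⁻¹) = ⊤ := by
    by_contra h
    have hm : AEStronglyMeasurable (fun y : ℝ => Real.exp (-r / 2) * y⁻¹)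
        (volume.restrict (Set.Ioo (0:ℝ) δ)) :=
      (measurable_const.mul measurable_inv).aestronglyMeasurable
    have hnn : 0 ≤ᵐ[volume.restrict (Set.Ioo (0:ℝ) δ)]
        fun y : ℝ => Real.exp (-r / 2) * y⁻¹ := by
      filter_upwards [ae_restrict_mem measurableSet_Ioo] with y hy
      exact mul_nonneg (Real.exp_nonneg _) (inv_nonneg.mpr hy.1.le)
    have hint : IntegrableOn (fun y : ℝ => Real.exp (-r / 2) * y⁻¹) (Set.Ioo 0 δ) :=
      ⟨hm, (hasFiniteIntegral_iff_ofReal hnn).mpr (lt_top_iff_ne_top.mpr h)⟩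
    have hinv : IntegrableOn (fun y : ℝ => y⁻¹) (Set.Ioo (0:ℝ) δ) := by
      have h2 : IntegrableOn (fun y : ℝ => Real.exp (r / 2) * (Real.exp (-r / 2) * y⁻¹))
          (Set.Ioo (0:ℝ) δ) := hint.const_mul _
      refine h2.congr_fun ?_ measurableSet_Ioo
      intro y _
      show Real.exp (r / 2) * (Real.exp (-r / 2) * y⁻¹) = y⁻¹
      rw [← mul_assoc, ← Real.exp_add,
        show r / 2 + -r / 2 = 0 by ring, Real.exp_zero, one_mul]
    have hrpow : IntegrableOn (fun y : ℝ => y ^ (-1:ℝ)) (Set.Ioo (0:ℝ) δ) := by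
      refine hinv.congr_fun ?_ measurableSet_Ioo
      intro y hy
      show y⁻¹ = y ^ (-1:ℝ)
      exact (Real.rpow_neg_one y).symm
    have hcon := (intervalIntegral.integrableOn_Ioo_rpow_iff hδ0).mp hrpow
    norm_num at hcon
  refine top_unique ?_
  calc (⊤ : ENNReal) = ∫⁻ y in Set.Ioo (0:ℝ) δ,
        ENNReal.ofReal (Real.exp (-r / 2) * y⁻¹) := htop.symm
    _ ≤ ∫⁻ y in Set.Ioo (0:ℝ) δ,
        ENNReal.ofReal (Real.exp (-Qfun (A r c γ) y)) := ?_
    _ ≤ ∫⁻ y in Set.Ioo (0:ℝ) ε,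
        ENNReal.ofReal (Real.exp (-Qfun (A r c γ) y)) :=
      lintegral_mono_set (Set.Ioo_subset_Ioo_right (min_le_left _ _))
  -- pointwise comparison on Ioo 0 δ
  have hcongr : ∫⁻ y in Set.Ioo (0:ℝ) δ,
      ENNReal.ofReal (Real.exp (-Qfun (A r c γ) y))
      = ∫⁻ y in Set.Ioo (0:ℝ) δ, ENNReal.ofReal (Real.exp (-φ r c γ y)) := by
    refine setLIntegral_congr_fun measurableSet_Ioo ?_
    intro y hy
    show ENNReal.ofReal (Real.exp (-Qfun (A r c γ) y)) = ENNReal.ofReal (Real.exp (-φ r c γ y))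
    rw [Qfun_eq r c γ hy.1]
  rw [hcongr]
  refine setLIntegral_mono ?_ ?_
  · exact ENNReal.measurable_ofReal.comp
      (Real.measurable_exp.comp (measurable_φ r c γ).neg)
  · intro y hy
    apply ENNReal.ofReal_le_ofReal
    have hy0 : (0:ℝ) < y := hy.1
    have hy1 : y ≤ 1 := le_of_lt (lt_of_lt_of_le hy.2 hδ1)
    have hφy : -φ r c γ y = -Real.log y +
        (r * (y ^ 2 - 1) / 2 - c * γ * (y ^ 4 - 1) / 16) := by
      unfold φ; ring
    rw [hφy, Real.exp_add, Real.exp_neg, Real.exp_log hy0, mul_comm]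
    refine mul_le_mul_of_nonneg_left (Real.exp_le_exp.mpr ?_) (inv_nonneg.mpr hy0.le)
    have hy2 : y ^ 2 ≤ 1 := by nlinarith
    have hy4 : y ^ 4 ≤ 1 := by nlinarith [mul_nonneg (sub_nonneg.2 hy2) (sq_nonneg y)]
    have hA : r * (y ^ 2 - 1) ≥ -r := by nlinarith [mul_nonneg hr.le (sq_nonneg y)]
    have hB : c * γ * (y ^ 4 - 1) ≤ 0 :=
      mul_nonpos_of_nonneg_of_nonpos (mul_pos hc hγ).le (by linarith)
    linarith

lemma integral_exp_neg_mul_Ioi {b : ℝ} (hb : 0 < b) (a : ℝ) :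
    ∫ z in Set.Ioi a, Real.exp (-b * z) = Real.exp (-b * a) / b := by
  have hd : ∀ x ∈ Set.Ici a,
      HasDerivAt (fun z => -Real.exp (-b * z) / b) (Real.exp (-b * x)) x := by
    intro x _
    have h1 : HasDerivAt (fun z : ℝ => -b * z) (-b) x := by
      simpa using (hasDerivAt_id x).const_mul (-b)
    have h2 := h1.exp.neg.div_const b
    exact h2.congr_deriv (by rw [div_eq_iff hb.ne']; ring)
  have ht : Tendsto (fun z => -Real.exp (-b * z) / b) atTop (𝓝 0) := by
    have h0 : Tendsto (fun z : ℝ => Real.exp (-b * z)) atTop (𝓝 0) :=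
      Real.tendsto_exp_atBot.comp (tendsto_id.const_mul_atTop_of_neg (neg_neg_iff_pos.2 hb))
    simpa using h0.neg.div_const b
  rw [integral_Ioi_of_hasDerivAt_of_tendsto' hd (exp_neg_integrableOn_Ioi a hb) ht]
  ring

/-- threshold beyond which `Q` grows at rate at least `y^2` -/
noncomputable def y₀ : ℝ := max 1 (4 * (1 + r) / (c * γ))

lemma y₀_ge_one : (1:ℝ) ≤ y₀ r c γ := le_max_left _ _

lemma claimA (hr : 0 < r) (hc : 0 < c) (hγ : 0 < γ) {y z : ℝ}
    (hy : y₀ r c γ ≤ y) (hz : y ≤ z) :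
    φ r c γ y + y ^ 2 * (z - y) ≤ φ r c γ z := by
  have hy1 : (1:ℝ) ≤ y := le_trans (y₀_ge_one r c γ) hy
  have hy0 : (0:ℝ) < y := lt_of_lt_of_le one_pos hy1
  have hcγ : (0:ℝ) < c * γ := mul_pos hc hγ
  have hcy : 4 * (1 + r) ≤ c * γ * y := by
    have h := le_trans (le_max_right 1 (4 * (1 + r) / (c * γ))) hy
    rw [div_le_iff₀ hcγ] at h
    linarith
  have hlog : Real.log y ≤ Real.log z := Real.log_le_log hy0 hz
  have h1 : (0:ℝ) ≤ z - y := by linarith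
  have h2 : 2 * y * (z - y) ≤ z ^ 2 - y ^ 2 := by nlinarith [sq_nonneg (z - y)]
  have h2' : (0:ℝ) ≤ z ^ 2 - y ^ 2 := by nlinarith
  have hcoef : (0:ℝ) ≤ c * γ * y ^ 2 / 8 - r / 2 := by
    have h := mul_le_mul_of_nonneg_right hcy (by linarith : (0:ℝ) ≤ y)
    nlinarith
  have hA : (z ^ 2 - y ^ 2) * (c * γ * y ^ 2 / 8) ≤ c * γ * (z ^ 4 - y ^ 4) / 16 := by
    nlinarith [mul_nonneg hcγ.le (sq_nonneg (z ^ 2 - y ^ 2))]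
  have hB : 2 * y * (z - y) * (c * γ * y ^ 2 / 8 - r / 2) ≤
      (z ^ 2 - y ^ 2) * (c * γ * y ^ 2 / 8 - r / 2) :=
    mul_le_mul_of_nonneg_right h2 hcoef
  have hq : y ^ 2 ≤ 2 * y * (c * γ * y ^ 2 / 8 - r / 2) := by
    have h := mul_le_mul_of_nonneg_right hcy (sq_nonneg y)
    have hyy : y ≤ y ^ 2 := by nlinarith
    nlinarith [h, mul_nonneg hr.le (sub_nonneg.2 hyy)]
  have hC : (z - y) * y ^ 2 ≤ (z - y) * (2 * y * (c * γ * y ^ 2 / 8 - r / 2)) :=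
    mul_le_mul_of_nonneg_left hq h1
  unfold φ
  nlinarith [hA, hB, hC, hlog]

lemma Gbound (hr : 0 < r) (hc : 0 < c) (hγ : 0 < γ) {y : ℝ} (hy : y₀ r c γ ≤ y) :
    (∫ z in Set.Ioi y, Real.exp (-Qfun (A r c γ) z)) ≤
      Real.exp (-φ r c γ y) / y ^ 2 := by
  have hy1 : (1:ℝ) ≤ y := le_trans (y₀_ge_one r c γ) hy
  have hy0 : (0:ℝ) < y := lt_of_lt_of_le one_pos hy1
  have hy2 : (0:ℝ) < y ^ 2 := by positivity
  have hint1 := integrableOn_expNegQ_Ioi r c γ hr hc hγ hy1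
  have heq : ∀ z : ℝ, Real.exp (-φ r c γ y) * Real.exp (-(y ^ 2) * (z - y))
      = (Real.exp (-φ r c γ y + y ^ 2 * y)) * Real.exp (-(y ^ 2) * z) := by
    intro z
    rw [← Real.exp_add, ← Real.exp_add]
    ring_nf
  have hint2 : IntegrableOn
      (fun z => Real.exp (-φ r c γ y) * Real.exp (-(y ^ 2) * (z - y)))
      (Set.Ioi y) := by
    have hbase : IntegrableOn (fun z : ℝ => Real.exp (-(y ^ 2) * z)) (Set.Ioi y) :=
      exp_neg_integrableOn_Ioi y hy2
    have h2 : IntegrableOn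
        (fun z : ℝ => (Real.exp (-φ r c γ y + y ^ 2 * y)) * Real.exp (-(y ^ 2) * z))
        (Set.Ioi y) := hbase.const_mul _
    exact h2.congr_fun (fun z _ => (heq z).symm) measurableSet_Ioi
  have hle := setIntegral_mono_on hint1 hint2 measurableSet_Ioi ?_
  · calc (∫ z in Set.Ioi y, Real.exp (-Qfun (A r c γ) z))
        ≤ ∫ z in Set.Ioi y,
            Real.exp (-φ r c γ y) * Real.exp (-(y ^ 2) * (z - y)) := hle
      _ = ∫ z in Set.Ioi y,
            (Real.exp (-φ r c γ y + y ^ 2 * y)) * Real.exp (-(y ^ 2) * z) := by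
          exact setIntegral_congr_fun measurableSet_Ioi (fun z _ => heq z)
      _ = (Real.exp (-φ r c γ y + y ^ 2 * y)) *
            ∫ z in Set.Ioi y, Real.exp (-(y ^ 2) * z) := by
          rw [integral_const_mul]
      _ = (Real.exp (-φ r c γ y + y ^ 2 * y)) * (Real.exp (-(y ^ 2) * y) / y ^ 2) := by
          rw [integral_exp_neg_mul_Ioi hy2 y]
      _ = Real.exp (-φ r c γ y) / y ^ 2 := by
          rw [div_eq_mul_inv, div_eq_mul_inv, ← mul_assoc, ← Real.exp_add]
          ring_nf
  · intro z hz
    have hz0 : (0:ℝ) < z := lt_trans hy0 hz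
    rw [Qfun_eq r c γ hz0, ← Real.exp_add]
    apply Real.exp_le_exp.mpr
    have := claimA r c γ hr hc hγ hy (le_of_lt hz)
    linarith

lemma Gbound1 (hr : 0 < r) (hc : 0 < c) (hγ : 0 < γ) {y : ℝ} (hy : 1 ≤ y) :
    (∫ z in Set.Ioi y, Real.exp (-Qfun (A r c γ) z)) ≤ Real.exp (K0 r c γ) := by
  have hy0 : (0:ℝ) < y := lt_of_lt_of_le one_pos hy
  have hint1 := integrableOn_expNegQ_Ioi r c γ hr hc hγ hy
  have hint2 : IntegrableOn (fun z : ℝ => Real.exp (K0 r c γ) * z ^ (-2:ℝ))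
      (Set.Ioi y) :=
    (integrableOn_Ioi_rpow_of_lt (show (-2:ℝ) < -1 by norm_num) hy0).const_mul _
  have hle := setIntegral_mono_on hint1 hint2 measurableSet_Ioi
    (fun z hz => negφ_bound r c γ hr hc hγ (le_trans hy (le_of_lt hz)))
  calc (∫ z in Set.Ioi y, Real.exp (-Qfun (A r c γ) z))
      ≤ ∫ z in Set.Ioi y, Real.exp (K0 r c γ) * z ^ (-2:ℝ) := hle
    _ = Real.exp (K0 r c γ) * ∫ z in Set.Ioi y, z ^ (-2:ℝ) := by
        rw [integral_const_mul]
    _ = Real.exp (K0 r c γ) * (-y ^ ((-2:ℝ) + 1) / ((-2:ℝ) + 1)) := by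
        rw [integral_Ioi_rpow_of_lt (show (-2:ℝ) < -1 by norm_num) hy0]
    _ = Real.exp (K0 r c γ) * y⁻¹ := by
        norm_num [Real.rpow_neg_one]
    _ ≤ Real.exp (K0 r c γ) * 1 := by
        apply mul_le_mul_of_nonneg_left _ (Real.exp_nonneg _)
        exact inv_le_one_of_one_le₀ hy
    _ = Real.exp (K0 r c γ) := mul_one _

lemma G_antitoneOn (hr : 0 < r) (hc : 0 < c) (hγ : 0 < γ) :
    AntitoneOn (fun y => ∫ z in Set.Ioi y, Real.exp (-Qfun (A r c γ) z))
      (Set.Ioi (1:ℝ)) := by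
  intro y1 h1 y2 _ h12
  refine setIntegral_mono_set (integrableOn_expNegQ_Ioi r c γ hr hc hγ (le_of_lt h1))
    (Filter.Eventually.of_forall fun z => Real.exp_nonneg _)
    (HasSubset.Subset.eventuallyLE (Set.Ioi_subset_Ioi h12))

lemma aesm_expQ_Ioi {y : ℝ} (hy : 0 < y) :
    AEStronglyMeasurable (fun z => Real.exp (Qfun (A r c γ) z))
      (volume.restrict (Set.Ioi y)) := by
  have h1 : ContinuousOn (fun z => Real.exp (φ r c γ z)) (Set.Ioi y) :=
    Real.continuous_exp.comp_continuousOn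
      ((contOn_φ r c γ).mono (Set.Ioi_subset_Ioi hy.le))
  refine (h1.aestronglyMeasurable measurableSet_Ioi).congr ?_
  filter_upwards [ae_restrict_mem measurableSet_Ioi] with z hz
  rw [Qfun_eq r c γ (lt_trans hy hz)]

lemma H3b (hr : 0 < r) (hc : 0 < c) (hγ : 0 < γ) :
    IntegrableOn (fun y => Real.exp (Qfun (A r c γ) y) *
      ∫ z in Set.Ioi y, Real.exp (-Qfun (A r c γ) z)) (Set.Ioi (1:ℝ)) := by
  set M : ℝ := y₀ r c γ + c * γ * (y₀ r c γ) ^ 4 / 16 with hMdef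
  set C : ℝ := (Real.exp M * Real.exp (K0 r c γ) + 1) * (y₀ r c γ) ^ 2 with hCdef
  have hy₀1 : (1:ℝ) ≤ y₀ r c γ := y₀_ge_one r c γ
  have hy₀0 : (0:ℝ) < y₀ r c γ := lt_of_lt_of_le one_pos hy₀1
  have hmeas : AEStronglyMeasurable (fun y => Real.exp (Qfun (A r c γ) y) *
      ∫ z in Set.Ioi y, Real.exp (-Qfun (A r c γ) z))
      (volume.restrict (Set.Ioi (1:ℝ))) := by
    refine (aesm_expQ_Ioi r c γ one_pos).mul ?_
    exact (aemeasurable_restrict_of_antitoneOn measurableSet_Ioi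
      (G_antitoneOn r c γ hr hc hγ)).aestronglyMeasurable
  refine Integrable.mono' (g := fun y => C * y ^ (-2:ℝ))
    ((integrableOn_Ioi_rpow_of_lt (show (-2:ℝ) < -1 by norm_num) one_pos).const_mul C)
    hmeas ?_
  filter_upwards [ae_restrict_mem measurableSet_Ioi] with y hy
  have hy1 : (1:ℝ) ≤ y := le_of_lt hy
  have hy0 : (0:ℝ) < y := lt_of_lt_of_le one_pos hy1
  have hGnn : 0 ≤ ∫ z in Set.Ioi y, Real.exp (-Qfun (A r c γ) z) :=
    setIntegral_nonneg measurableSet_Ioi (fun z _ => Real.exp_nonneg _)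
  have hFnn : 0 ≤ Real.exp (Qfun (A r c γ) y) *
      ∫ z in Set.Ioi y, Real.exp (-Qfun (A r c γ) z) :=
    mul_nonneg (Real.exp_nonneg _) hGnn
  rw [Real.norm_eq_abs, abs_of_nonneg hFnn]
  have hrpow : y ^ (-2:ℝ) = (y ^ 2)⁻¹ := by
    rw [show ((-2:ℝ)) = -((2:ℕ):ℝ) by norm_num, Real.rpow_neg hy0.le,
      Real.rpow_natCast]
  rcases le_or_gt (y₀ r c γ) y with h | h
  · -- large y : F y ≤ y^{-2} ≤ C y^{-2}
    have hG := Gbound r c γ hr hc hγ h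
    have hC1 : (1:ℝ) ≤ C := by
      have hE : (1:ℝ) ≤ Real.exp M * Real.exp (K0 r c γ) + 1 := by
        have := mul_pos (Real.exp_pos M) (Real.exp_pos (K0 r c γ))
        linarith
      have hysq : (1:ℝ) ≤ y₀ r c γ ^ 2 := by nlinarith
      nlinarith [mul_nonneg (sub_nonneg.2 hE) (sub_nonneg.2 hysq)]
    calc Real.exp (Qfun (A r c γ) y) * ∫ z in Set.Ioi y, Real.exp (-Qfun (A r c γ) z)
        ≤ Real.exp (Qfun (A r c γ) y) * (Real.exp (-φ r c γ y) / y ^ 2) :=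
          mul_le_mul_of_nonneg_left hG (Real.exp_nonneg _)
      _ = (y ^ 2)⁻¹ := by
          rw [Qfun_eq r c γ hy0, Real.exp_neg, div_eq_mul_inv, ← mul_assoc,
            mul_inv_cancel₀ (Real.exp_pos _).ne']
          ring
      _ = 1 * y ^ (-2:ℝ) := by rw [hrpow, one_mul]
      _ ≤ C * y ^ (-2:ℝ) := by
          apply mul_le_mul_of_nonneg_right hC1
          positivity
  · -- 1 < y < y₀
    have hG := Gbound1 r c γ hr hc hγ hy1
    have hQ : Real.exp (Qfun (A r c γ) y) ≤ Real.exp M := by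
      rw [Qfun_eq r c γ hy0]
      apply Real.exp_le_exp.mpr
      have hlog : Real.log y ≤ y₀ r c γ := by
        have := Real.log_le_sub_one_of_pos hy0
        linarith [h.le]
      have hy4 : y ^ 4 ≤ (y₀ r c γ) ^ 4 := pow_le_pow_left₀ hy0.le h.le 4
      have hA : 0 ≤ r * (y ^ 2 - 1) := by
        have : (1:ℝ) ≤ y ^ 2 := by nlinarith
        exact mul_nonneg hr.le (by linarith)
      have hB : c * γ * (y ^ 4 - 1) ≤ c * γ * (y₀ r c γ) ^ 4 := by
        nlinarith [mul_pos hc hγ]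
      unfold φ
      rw [hMdef]
      linarith
    calc Real.exp (Qfun (A r c γ) y) * ∫ z in Set.Ioi y, Real.exp (-Qfun (A r c γ) z)
        ≤ Real.exp M * Real.exp (K0 r c γ) := by
          apply mul_le_mul hQ hG hGnn (Real.exp_nonneg _)
      _ ≤ C * y ^ (-2:ℝ) := by
          rw [hrpow]
          have hyy : (y ^ 2)⁻¹ ≥ ((y₀ r c γ) ^ 2)⁻¹ := by
            apply inv_anti₀ (by positivity)
            nlinarith [h.le, hy0.le]
          have hCnn : (0:ℝ) ≤ Real.exp M * Real.exp (K0 r c γ) + 1 := by positivity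
          calc Real.exp M * Real.exp (K0 r c γ)
              ≤ (Real.exp M * Real.exp (K0 r c γ) + 1) := by linarith
            _ = C * ((y₀ r c γ) ^ 2)⁻¹ := by
                rw [hCdef, mul_assoc, mul_inv_cancel₀ (by positivity : ((y₀ r c γ) ^ 2) ≠ 0),
                  mul_one]
            _ ≤ C * (y ^ 2)⁻¹ := by
                apply mul_le_mul_of_nonneg_left hyy
                rw [hCdef]; positivity

end LFaux

/-- For the transformed logistic Feller diffusion, i.e. the diffusion
`dX_t = dB_t − α(X_t)dt` with `α(x) = 1/(2x) − rx/2 + cγx³/8` and `r, c, γ > 0`,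
hypothesis (H) holds:
(H1) absorption at 0 is certain (equivalently `Λ(∞) = ∞` and `κ(0⁺) < ∞`);
(H2) `μ(0,ε) = ∞` for every `ε > 0`;
(H3) `∫₁^∞ e^{Q(y)} (∫_y^∞ e^{-Q(z)} dz) dy < ∞`. -/
theorem logistic_feller_hypH (r c γ : ℝ) (hr : 0 < r) (hc : 0 < c) (hγ : 0 < γ) :
    HypH (fun x => 1 / (2 * x) - r * x / 2 + c * γ * x ^ 3 / 8) := by
  have hA : (fun x => 1 / (2 * x) - r * x / 2 + c * γ * x ^ 3 / 8) = LFaux.A r c γ := rfl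
  rw [hA]
  exact ⟨⟨LFaux.H1a r c γ hr hc hγ, LFaux.H1b r c γ hr hc hγ⟩,
    LFaux.H2 r c γ hr hc hγ,
    fun y hy => LFaux.integrableOn_expNegQ_Ioi r c γ hr hc hγ hy,
    LFaux.H3b r c γ hr hc hγ⟩
end
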